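/- arXiv:1712.01702 — 2 statements merged into one kernel-verified Lean document; each statement's English description precedes it below -/
import Mathlib

section
/- For every v ∈ H¹([a,b]) with a < b and every m > 0, one has sup_{x∈[a,b]} |v(x)| ≤ √((b−a)/(2m+3))·‖v'‖_{L²([a,b])} + ((m+1)/√((b−a)(2m+1)))·‖v‖_{L²([a,b])}. -/
open MeasureTheory

namespace KatoAux

lemma rpow_sq {u : ℝ} (hu : 0 ≤ u) {e : ℝ} (he : 0 < e) :
    (u ^ e) ^ 2 = u ^ (2 * e) := by
  rw [sq, ← Real.rpow_add' hu (by linarith)]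
  congr 1; ring

/-- Cauchy–Schwarz for interval integrals. -/
lemma abs_integral_mul_le {α β : ℝ} (hab : α ≤ β) (f g : ℝ → ℝ)
    (hf2 : IntervalIntegrable (fun t => f t ^ 2) volume α β)
    (hg2 : IntervalIntegrable (fun t => g t ^ 2) volume α β)
    (hfg : IntervalIntegrable (fun t => f t * g t) volume α β) :
    |∫ t in α..β, f t * g t| ≤
      Real.sqrt (∫ t in α..β, f t ^ 2) * Real.sqrt (∫ t in α..β, g t ^ 2) := by
  set F := ∫ t in α..β, f t ^ 2 with hF
  set G := ∫ t in α..β, g t ^ 2 with hG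
  set Z := ∫ t in α..β, f t * g t with hZ
  have hF0 : 0 ≤ F := intervalIntegral.integral_nonneg hab (fun u _ => sq_nonneg _)
  have hG0 : 0 ≤ G := intervalIntegral.integral_nonneg hab (fun u _ => sq_nonneg _)
  have hquad : ∀ t : ℝ, 0 ≤ F * (t * t) + (2 * Z) * t + G := by
    intro t
    have h1 : (0:ℝ) ≤ ∫ u in α..β, (t * f u + g u) ^ 2 :=
      intervalIntegral.integral_nonneg hab (fun u _ => sq_nonneg _)
    have h2 : (∫ u in α..β, (t * f u + g u) ^ 2)
        = t ^ 2 * F + (2 * t * Z + G) := by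
      rw [hF, hG, hZ, ← intervalIntegral.integral_const_mul,
        ← intervalIntegral.integral_const_mul,
        ← intervalIntegral.integral_add (hfg.const_mul _) hg2,
        ← intervalIntegral.integral_add (hf2.const_mul _) ((hfg.const_mul _).add hg2)]
      apply intervalIntegral.integral_congr
      intro u _
      ring
    nlinarith [h1, h2]
  have hd := discrim_le_zero hquad
  rw [discrim] at hd
  have hZ2 : Z ^ 2 ≤ F * G := by nlinarith [hd]
  calc |Z| = Real.sqrt (Z ^ 2) := (Real.sqrt_sq_eq_abs Z).symm
    _ ≤ Real.sqrt (F * G) := Real.sqrt_le_sqrt hZ2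
    _ = Real.sqrt F * Real.sqrt G := Real.sqrt_mul hF0 _

lemma sqrt_pair {I1 I2 V1 V2 : ℝ} (h1 : 0 ≤ I1) (h2 : 0 ≤ I2) (h3 : 0 ≤ V1) (h4 : 0 ≤ V2) :
    Real.sqrt I1 * Real.sqrt V1 + Real.sqrt I2 * Real.sqrt V2 ≤
      Real.sqrt (I1 + I2) * Real.sqrt (V1 + V2) := by
  rw [← Real.sqrt_mul h1, ← Real.sqrt_mul h2, ← Real.sqrt_mul (by linarith)]
  have key : (Real.sqrt (I1 * V1) + Real.sqrt (I2 * V2)) ^ 2 ≤ (I1 + I2) * (V1 + V2) := by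
    have e1 : Real.sqrt (I1 * V1) ^ 2 = I1 * V1 := Real.sq_sqrt (by positivity)
    have e2 : Real.sqrt (I2 * V2) ^ 2 = I2 * V2 := Real.sq_sqrt (by positivity)
    have e3 : Real.sqrt (I1 * V1) * Real.sqrt (I2 * V2)
        = Real.sqrt (I1 * V2) * Real.sqrt (I2 * V1) := by
      rw [← Real.sqrt_mul (by positivity), ← Real.sqrt_mul (by positivity)]
      ring_nf
    have e4 : Real.sqrt (I1 * V2) ^ 2 = I1 * V2 := Real.sq_sqrt (by positivity)
    have e5 : Real.sqrt (I2 * V1) ^ 2 = I2 * V1 := Real.sq_sqrt (by positivity)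
    nlinarith [sq_nonneg (Real.sqrt (I1 * V2) - Real.sqrt (I2 * V1))]
  calc Real.sqrt (I1 * V1) + Real.sqrt (I2 * V2)
      = Real.sqrt ((Real.sqrt (I1 * V1) + Real.sqrt (I2 * V2)) ^ 2) :=
        (Real.sqrt_sq (by positivity)).symm
    _ ≤ Real.sqrt ((I1 + I2) * (V1 + V2)) := Real.sqrt_le_sqrt key
    _ = Real.sqrt ((I1 + I2) * (V1 + V2)) := rfl

/-- FTC closed form for `∫ ((c+y)^e - R)^2`. -/
lemma ftc_core {e : ℝ} (c R α β : ℝ) (he : 0 < e) (hpos : ∀ y ∈ Set.uIcc α β, 0 ≤ c + y) :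
    ∫ y in α..β, ((c + y) ^ e - R) ^ 2 =
      ((c + β) ^ (2 * e + 1) - (c + α) ^ (2 * e + 1)) / (2 * e + 1)
        - 2 * R * ((c + β) ^ (e + 1) - (c + α) ^ (e + 1)) / (e + 1) + R ^ 2 * (β - α) := by
  have hcont : Continuous fun y : ℝ => ((c + y) ^ e - R) ^ 2 := by
    apply Continuous.pow
    exact ((continuous_const.add continuous_id).rpow_const
      (fun x => Or.inr he.le)).sub continuous_const
  set F : ℝ → ℝ := fun y =>
    (c + y) ^ (2 * e + 1) / (2 * e + 1) - 2 * R * (c + y) ^ (e + 1) / (e + 1) + R ^ 2 * y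
    with hFdef
  have hder : ∀ y ∈ Set.uIcc α β, HasDerivAt F (((c + y) ^ e - R) ^ 2) y := by
    intro y hy
    have hcy : 0 ≤ c + y := hpos y hy
    have h1 : HasDerivAt (fun t : ℝ => c + t) 1 y := (hasDerivAt_id y).const_add c
    have h2 : HasDerivAt (fun t : ℝ => (c + t) ^ (2 * e + 1))
        ((2 * e + 1) * (c + y) ^ (2 * e + 1 - 1) * 1) y :=
      (Real.hasDerivAt_rpow_const (x := c + y) (Or.inr (by linarith))).comp y h1
    have h3 : HasDerivAt (fun t : ℝ => (c + t) ^ (e + 1))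
        ((e + 1) * (c + y) ^ (e + 1 - 1) * 1) y :=
      (Real.hasDerivAt_rpow_const (x := c + y) (Or.inr (by linarith))).comp y h1
    have h4 := ((h2.div_const (2 * e + 1)).sub
      ((h3.const_mul (2 * R)).div_const (e + 1))).add ((hasDerivAt_id y).const_mul (R ^ 2))
    refine h4.congr_deriv ?_
    have e1 : 2 * e + 1 - 1 = e + e := by ring
    have e2 : e + 1 - 1 = e := by ring
    rw [e1, e2, Real.rpow_add' hcy (by positivity)]
    have ha : (2 * e + 1) ≠ 0 := by positivity
    have hb : (e + 1) ≠ 0 := by positivity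
    field_simp
    ring
  rw [intervalIntegral.integral_eq_sub_of_hasDerivAt hder (hcont.intervalIntegrable α β)]
  simp only [hFdef]
  ring

lemma ftc_core0 {e : ℝ} (R α β : ℝ) (he : 0 < e) (hpos : ∀ y ∈ Set.uIcc α β, 0 ≤ y) :
    ∫ y in α..β, (y ^ e - R) ^ 2 =
      (β ^ (2 * e + 1) - α ^ (2 * e + 1)) / (2 * e + 1)
        - 2 * R * (β ^ (e + 1) - α ^ (e + 1)) / (e + 1) + R ^ 2 * (β - α) := by
  have := ftc_core (e := e) 0 R α β he (by simpa using hpos)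
  simpa using this

lemma sq_abs_bound (A B : ℝ) : |A * B| ≤ A ^ 2 + B ^ 2 := by
  rw [abs_mul]
  nlinarith [sq_nonneg (|A| - |B|), sq_abs A, sq_abs B, abs_nonneg A, abs_nonneg B]

lemma mul_sq_int {α β : ℝ} (hab : α ≤ β) {F g : ℝ → ℝ} (hF : Continuous F)
    (hg : AEStronglyMeasurable g (volume.restrict (Set.Ioc α β)))
    (hg2 : IntervalIntegrable (fun t => g t ^ 2) volume α β) :
    IntervalIntegrable (fun t => F t * g t) volume α β := by
  rw [intervalIntegrable_iff_integrableOn_Ioc_of_le hab] at hg2 ⊢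
  have hF2 : IntegrableOn (fun t => F t ^ 2) (Set.Ioc α β) volume := by
    have h := (hF.pow 2).intervalIntegrable (μ := volume) α β
    rwa [intervalIntegrable_iff_integrableOn_Ioc_of_le hab] at h
  refine Integrable.mono' (hF2.add hg2) (hF.aestronglyMeasurable.restrict.mul hg) ?_
  filter_upwards with y
  simp only [Pi.add_apply]
  rw [Real.norm_eq_abs]
  exact sq_abs_bound _ _

lemma sq_int_self {α β : ℝ} (hab : α ≤ β) {g : ℝ → ℝ}
    (hg : AEStronglyMeasurable g (volume.restrict (Set.Ioc α β)))
    (hg2 : IntervalIntegrable (fun t => g t ^ 2) volume α β) :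
    IntervalIntegrable g volume α β := by
  rw [intervalIntegrable_iff_integrableOn_Ioc_of_le hab] at hg2 ⊢
  have hc : IntegrableOn (fun _ : ℝ => (1:ℝ)) (Set.Ioc α β) volume :=
    integrableOn_const measure_Ioc_lt_top.ne
  refine Integrable.mono' (hg2.add hc) hg ?_
  filter_upwards with y
  simp only [Pi.add_apply]
  rw [Real.norm_eq_abs]
  nlinarith [sq_nonneg (|g y| - 1), sq_abs (g y), abs_nonneg (g y)]



/-- Key inequality for the weight L² norm. -/
lemma keyW {s p q A B S P2 Q2 S2 : ℝ} (hp : 0 ≤ p) (hq : 0 ≤ q) (hpq : p + q = s)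
    (hA : 0 ≤ A) (hB : 0 ≤ B) (hS : 0 ≤ S) (hP2 : 0 ≤ P2) (hQ2 : 0 ≤ Q2)
    (hA2 : A ^ 2 = p * P2) (hB2 : B ^ 2 = q * Q2) (hS2 : S ^ 2 = s * S2) :
    s * (2 * S2 - P2 - Q2) ≤ (2 * S - A - B) ^ 2 := by
  subst hpq
  rcases eq_or_lt_of_le hp with hp0 | hp0
  · have hA0 : A = 0 := by
      have h0 : A ^ 2 = 0 := by rw [hA2, ← hp0]; ring
      exact sq_eq_zero_iff.mp h0
    subst hA0
    nlinarith [sq_nonneg (S - B), mul_nonneg hq hP2, hp0]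
  rcases eq_or_lt_of_le hq with hq0 | hq0
  · have hB0 : B = 0 := by
      have h0 : B ^ 2 = 0 := by rw [hB2, ← hq0]; ring
      exact sq_eq_zero_iff.mp h0
    subst hB0
    nlinarith [sq_nonneg (S - A), mul_nonneg hp hQ2, hq0]
  have hid : p * q * ((p + q) * (P2 + Q2) - (A + B) ^ 2) = (A * q - B * p) ^ 2 := by
    linear_combination (-(p + q) * q) * hA2 - ((p + q) * p) * hB2
  have hEngel : (A + B) ^ 2 ≤ (p + q) * (P2 + Q2) := by
    nlinarith [sq_nonneg (A * q - B * p), mul_pos hp0 hq0, hid]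
  nlinarith [sq_nonneg (S - A - B), hS2, hEngel]

/-- Key inequality for the kernel L² norm (one side). -/
lemma keyG {m s t u A B S : ℝ} (hm : 0 < m) (ht : 0 ≤ t) (hu : 0 ≤ u) (htu : t + u = s)
    (hS : 0 ≤ S) (hA : 0 ≤ A) (hAS : A ≤ S) (hBs : B * s ≤ u * S)
    (hamgm : (m + 2) * A * s ≤ (m + 1) * t * A + s * S) :
    (s * S ^ 2 - t * A ^ 2) / (2 * m + 3) - 2 * A * (s * S - t * A) / (m + 2)
        + A ^ 2 * (s - t)
      ≤ s * (S - A) * (2 * S - A - B) / (2 * m + 3) := by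
  subst htu
  have h1 : 0 ≤ (S - A) * (u * S - B * (t + u)) :=
    mul_nonneg (by linarith) (by linarith)
  have h2 : 0 ≤ t * S * (S - A) := mul_nonneg (mul_nonneg ht hS) (by linarith)
  have h3 : 0 ≤ A * ((t + u) * S - (m + 2) * A * (t + u) + (m + 1) * t * A) :=
    mul_nonneg hA (by linarith)
  have hden : (0:ℝ) < (m + 2) * (2 * m + 3) := by positivity
  have hid : (m + 2) * (2 * m + 3) *
      (((t + u) * (S - A) * (2 * S - A - B) / (2 * m + 3)) -
        (((t + u) * S ^ 2 - t * A ^ 2) / (2 * m + 3)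
          - 2 * A * ((t + u) * S - t * A) / (m + 2) + A ^ 2 * ((t + u) - t)))
      = (m + 2) * ((S - A) * (u * S - B * (t + u)))
        + (m + 2) * (t * S * (S - A))
        + (2 * m + 2) * (A * ((t + u) * S - (m + 2) * A * (t + u) + (m + 1) * t * A)) := by
    field_simp
    ring
  nlinarith [hid, h1, h2, h3, hden, mul_nonneg (by linarith : (0:ℝ) ≤ m + 2) h1,
    mul_nonneg (by linarith : (0:ℝ) ≤ m + 2) h2,
    mul_nonneg (by linarith : (0:ℝ) ≤ 2 * m + 2) h3]

/-- Weighted AM-GM ingredient. -/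
lemma amgm_aux {m r s : ℝ} (hm : 0 < m) (hr : 0 ≤ r) (hrs : r ≤ s) :
    (m + 2) * r ^ (m + 1) * s ≤ (m + 1) * (r * r ^ (m + 1)) + s * s ^ (m + 1) := by
  have hs : 0 ≤ s := le_trans hr hrs
  have hm2 : (0:ℝ) < m + 2 := by linarith
  have hm2' : (m + 2 : ℝ) ≠ 0 := hm2.ne'
  have hw : (m + 1) / (m + 2) + 1 / (m + 2) = 1 := by field_simp; ring
  have hgm := Real.geom_mean_le_arith_mean2_weighted
    (by positivity : (0:ℝ) ≤ (m + 1) / (m + 2)) (by positivity : (0:ℝ) ≤ 1 / (m + 2))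
    (by positivity : (0:ℝ) ≤ r ^ (m + 2)) (by positivity : (0:ℝ) ≤ s ^ (m + 2)) hw
  have e1 : (r ^ (m + 2)) ^ ((m + 1) / (m + 2)) = r ^ (m + 1) := by
    rw [← Real.rpow_mul hr]
    congr 1
    field_simp
  have e2 : (s ^ (m + 2)) ^ ((1:ℝ) / (m + 2)) = s := by
    rw [← Real.rpow_mul hs]
    rw [show (m + 2) * ((1:ℝ) / (m + 2)) = 1 by field_simp]
    exact Real.rpow_one s
  have e3 : r ^ (m + 2) = r * r ^ (m + 1) := by
    rw [show m + 2 = 1 + (m + 1) by ring, Real.rpow_add' hr (by linarith), Real.rpow_one]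
  have e4 : s ^ (m + 2) = s * s ^ (m + 1) := by
    rw [show m + 2 = 1 + (m + 1) by ring, Real.rpow_add' hs (by linarith), Real.rpow_one]
  rw [e1, e2, e3, e4] at hgm
  calc (m + 2) * r ^ (m + 1) * s = (m + 2) * (r ^ (m + 1) * s) := by ring
    _ ≤ (m + 2) * ((m + 1) / (m + 2) * (r * r ^ (m + 1)) + 1 / (m + 2) * (s * s ^ (m + 1))) :=
        by exact mul_le_mul_of_nonneg_left hgm hm2.le
    _ = (m + 1) * (r * r ^ (m + 1)) + s * s ^ (m + 1) := by field_simp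


end KatoAux

section Main

open KatoAux

set_option maxHeartbeats 1000000 in
theorem stmt4_main (a b m : ℝ) (hab : a < b) (hm : 0 < m) (v v' : ℝ → ℝ)
    (hderiv : ∀ x ∈ Set.Icc a b, HasDerivAt v (v' x) x)
    (hv : IntervalIntegrable (fun t => (v t) ^ 2) volume a b)
    (hv' : IntervalIntegrable (fun t => (v' t) ^ 2) volume a b) :
    ∀ x ∈ Set.Icc a b, |v x| ≤
      Real.sqrt ((b - a) / (2 * m + 3)) * Real.sqrt (∫ t in a..b, (v' t) ^ 2) +
        (m + 1) / Real.sqrt ((b - a) * (2 * m + 1)) * Real.sqrt (∫ t in a..b, (v t) ^ 2) := by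
  intro x hx
  obtain ⟨hax, hxb⟩ := hx
  have hab' : a ≤ b := hab.le
  have hm1 : (0:ℝ) < m + 1 := by linarith
  have h2m1 : (0:ℝ) < 2 * m + 1 := by linarith
  have h2m3 : (0:ℝ) < 2 * m + 3 := by linarith
  have hm2 : (0:ℝ) < m + 2 := by linarith
  set s := b - a with hs
  set p := x - a with hpdef
  set q := b - x with hqdef
  have hs0 : 0 < s := by rw [hs]; linarith
  have hp0 : 0 ≤ p := by rw [hpdef]; linarith
  have hq0 : 0 ≤ q := by rw [hqdef]; linarith
  have hps : p ≤ s := by rw [hpdef, hs]; linarith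
  have hqs : q ≤ s := by rw [hqdef, hs]; linarith
  have hpq : p + q = s := by rw [hpdef, hqdef, hs]; ring
  set P := p ^ (m+1) with hPdef
  set Q := q ^ (m+1) with hQdef
  set S := s ^ (m+1) with hSdef
  have hP0 : 0 ≤ P := Real.rpow_nonneg hp0 _
  have hQ0 : 0 ≤ Q := Real.rpow_nonneg hq0 _
  have hS0 : 0 < S := Real.rpow_pos_of_pos hs0 _
  have hPS : P ≤ S := Real.rpow_le_rpow hp0 hps (by linarith)
  have hQS : Q ≤ S := Real.rpow_le_rpow hq0 hqs (by linarith)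
  have hscale : ∀ r : ℝ, 0 ≤ r → r ≤ s → r ^ (m+1) * s ≤ r * s ^ (m+1) := by
    intro r hr hrs
    have h1 : r ^ m ≤ s ^ m := Real.rpow_le_rpow hr hrs hm.le
    have e1 : r ^ (m+1) = r ^ m * r := by
      rw [Real.rpow_add' hr (by linarith), Real.rpow_one]
    have e2 : s ^ (m+1) = s ^ m * s := by
      rw [Real.rpow_add' hs0.le (by linarith), Real.rpow_one]
    rw [e1, e2]
    have h2 : 0 ≤ r * s := mul_nonneg hr hs0.le
    nlinarith [h1, h2]
  have hPsS : P * s ≤ p * S := hscale p hp0 hps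
  have hQsS : Q * s ≤ q * S := hscale q hq0 hqs
  have hPQS : P + Q ≤ S := by nlinarith [hPsS, hQsS, hpq, hs0]
  set D := 2 * S - P - Q with hDdef
  have hD0 : 0 < D := by rw [hDdef]; linarith
  have hD0' : D ≠ 0 := ne_of_gt hD0
  set c₁ := s - x with hc₁def
  set c₂ := s + x with hc₂def
  have hc₁a : c₁ + a = q := by rw [hc₁def, hqdef, hs]; ring
  have hc₁x : c₁ + x = s := by rw [hc₁def]; ring
  have hc₂x : c₂ - x = s := by rw [hc₂def]; ring
  have hc₂b : c₂ - b = p := by rw [hc₂def, hpdef, hs]; ring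
  have hpos₁ : ∀ y ∈ Set.uIcc a x, 0 ≤ c₁ + y := by
    intro y hy
    rw [Set.uIcc_of_le hax] at hy
    rw [hc₁def, hs]
    linarith [hy.1]
  have hpos₂ : ∀ y ∈ Set.uIcc x b, 0 ≤ c₂ - y := by
    intro y hy
    rw [Set.uIcc_of_le hxb] at hy
    rw [hc₂def, hs]
    linarith [hy.2]
  have hpos₀ : ∀ u ∈ Set.uIcc p s, 0 ≤ u := by
    intro u hu
    rw [Set.uIcc_of_le hps] at hu
    linarith [hu.1]
  set Φ₁ : ℝ → ℝ := fun y => ((c₁ + y) ^ (m+1) - Q) / D with hΦ₁def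
  set Φ₂ : ℝ → ℝ := fun y => (P - (c₂ - y) ^ (m+1)) / D with hΦ₂def
  set w₁ : ℝ → ℝ := fun y => (m+1) * (c₁ + y) ^ m / D with hw₁def
  set w₂ : ℝ → ℝ := fun y => (m+1) * (c₂ - y) ^ m / D with hw₂def
  have hΦ₁c : Continuous Φ₁ := by
    rw [hΦ₁def]
    exact (((continuous_const.add continuous_id).rpow_const
      (fun _ => Or.inr (by linarith))).sub continuous_const).div_const D
  have hΦ₂c : Continuous Φ₂ := by
    rw [hΦ₂def]
    exact (continuous_const.sub ((continuous_const.sub continuous_id).rpow_const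
      (fun _ => Or.inr (by linarith)))).div_const D
  have hw₁c : Continuous w₁ := by
    rw [hw₁def]
    exact (continuous_const.mul ((continuous_const.add continuous_id).rpow_const
      (fun _ => Or.inr hm.le))).div_const D
  have hw₂c : Continuous w₂ := by
    rw [hw₂def]
    exact (continuous_const.mul ((continuous_const.sub continuous_id).rpow_const
      (fun _ => Or.inr hm.le))).div_const D
  have hΦ₁d : ∀ y ∈ Set.uIcc a x, HasDerivAt Φ₁ (w₁ y) y := by
    intro y _
    have h1 : HasDerivAt (fun t : ℝ => c₁ + t) 1 y := (hasDerivAt_id y).const_add c₁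
    have h2 : HasDerivAt (fun t : ℝ => (c₁ + t) ^ (m+1))
        ((m+1) * (c₁ + y) ^ (m+1-1) * 1) y :=
      (Real.hasDerivAt_rpow_const (x := c₁ + y) (Or.inr (by linarith))).comp y h1
    have h3 := (h2.sub_const Q).div_const D
    simp only [hΦ₁def, hw₁def]
    refine h3.congr_deriv ?_
    rw [show m + 1 - 1 = m by ring]
    ring
  have hΦ₂d : ∀ y ∈ Set.uIcc x b, HasDerivAt Φ₂ (w₂ y) y := by
    intro y _
    have h1 : HasDerivAt (fun t : ℝ => c₂ - t) (-1) y := (hasDerivAt_id y).const_sub c₂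
    have h2 : HasDerivAt (fun t : ℝ => (c₂ - t) ^ (m+1))
        ((m+1) * (c₂ - y) ^ (m+1-1) * (-1)) y :=
      (Real.hasDerivAt_rpow_const (x := c₂ - y) (Or.inr (by linarith))).comp y h1
    have h3 := (h2.const_sub P).div_const D
    simp only [hΦ₂def, hw₂def]
    refine h3.congr_deriv ?_
    rw [show m + 1 - 1 = m by ring]
    ring
  -- closed forms of the four integrals
  have hI₁ : (∫ y in a..x, (w₁ y) ^ 2)
      = (m+1)^2 / D^2 * ((s ^ (2*m+1) - q ^ (2*m+1)) / (2*m+1)) := by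
    have hcg : Set.EqOn (fun y => (w₁ y) ^ 2)
        (fun y => (m+1)^2 / D^2 * ((c₁ + y) ^ m - 0) ^ 2) (Set.uIcc a x) := by
      intro y _
      simp only [hw₁def, sub_zero, div_pow, mul_pow]
      ring
    rw [intervalIntegral.integral_congr hcg, intervalIntegral.integral_const_mul,
      ftc_core (e := m) c₁ 0 a x hm hpos₁, hc₁x, hc₁a]
    ring
  have hI₂ : (∫ y in x..b, (w₂ y) ^ 2)
      = (m+1)^2 / D^2 * ((s ^ (2*m+1) - p ^ (2*m+1)) / (2*m+1)) := by
    have hcg : Set.EqOn (fun y => (w₂ y) ^ 2)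
        (fun y => (m+1)^2 / D^2 * ((fun u : ℝ => (u ^ m - 0) ^ 2) (c₂ - y))) (Set.uIcc x b) := by
      intro y _
      simp only [hw₂def, sub_zero, div_pow, mul_pow]
      ring
    rw [intervalIntegral.integral_congr hcg, intervalIntegral.integral_const_mul,
      intervalIntegral.integral_comp_sub_left (fun u : ℝ => (u ^ m - 0) ^ 2) c₂,
      hc₂b, hc₂x, ftc_core0 (e := m) 0 p s hm hpos₀]
    ring
  have hJ₁ : (∫ y in a..x, (Φ₁ y) ^ 2)
      = 1 / D^2 * ((s ^ (2*m+3) - q ^ (2*m+3)) / (2*m+3)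
          - 2*Q*(s ^ (m+2) - q ^ (m+2)) / (m+2) + Q^2 * p) := by
    have hcg : Set.EqOn (fun y => (Φ₁ y) ^ 2)
        (fun y => 1 / D^2 * (((c₁ + y) ^ (m+1) - Q) ^ 2)) (Set.uIcc a x) := by
      intro y _
      simp only [hΦ₁def, div_pow]
      ring
    rw [intervalIntegral.integral_congr hcg, intervalIntegral.integral_const_mul,
      ftc_core (e := m+1) c₁ Q a x hm1 hpos₁, hc₁x, hc₁a,
      show 2*(m+1)+1 = 2*m+3 by ring, show m+1+1 = m+2 by ring, ← hpdef]
  have hJ₂ : (∫ y in x..b, (Φ₂ y) ^ 2)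
      = 1 / D^2 * ((s ^ (2*m+3) - p ^ (2*m+3)) / (2*m+3)
          - 2*P*(s ^ (m+2) - p ^ (m+2)) / (m+2) + P^2 * q) := by
    have hcg : Set.EqOn (fun y => (Φ₂ y) ^ 2)
        (fun y => 1 / D^2 * ((fun u : ℝ => (u ^ (m+1) - P) ^ 2) (c₂ - y))) (Set.uIcc x b) := by
      intro y _
      simp only [hΦ₂def, div_pow]
      ring
    rw [intervalIntegral.integral_congr hcg, intervalIntegral.integral_const_mul,
      intervalIntegral.integral_comp_sub_left (fun u : ℝ => (u ^ (m+1) - P) ^ 2) c₂,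
      hc₂b, hc₂x, ftc_core0 (e := m+1) P p s hm1 hpos₀,
      show 2*(m+1)+1 = 2*m+3 by ring, show m+1+1 = m+2 by ring,
      show s - p = q by linarith]
  -- power-splitting identities
  have hsplit3 : ∀ r : ℝ, 0 ≤ r → (r ^ (m+1))^2 = r * r ^ (2*m+1) := by
    intro r hr
    rw [rpow_sq hr hm1, show (2*(m+1) : ℝ) = 1 + (2*m+1) by ring,
      Real.rpow_add' hr (by linarith), Real.rpow_one]
  have hsplit23 : ∀ r : ℝ, 0 ≤ r → r ^ (2*m+3) = r * (r ^ (m+1))^2 := by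
    intro r hr
    rw [rpow_sq hr hm1, show (2*(m+1) : ℝ) = 2*m+2 by ring,
      show (2*m+3 : ℝ) = 1 + (2*m+2) by ring, Real.rpow_add' hr (by linarith), Real.rpow_one]
  have hsplit12 : ∀ r : ℝ, 0 ≤ r → r ^ (m+2) = r * r ^ (m+1) := by
    intro r hr
    rw [show (m+2 : ℝ) = 1 + (m+1) by ring, Real.rpow_add' hr (by linarith), Real.rpow_one]
  -- bound for the weight part
  have hkW := keyW (S2 := s ^ (2*m+1)) hp0 hq0 hpq hP0 hQ0 hS0.le
    (Real.rpow_nonneg hp0 _) (Real.rpow_nonneg hq0 _)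
    (hsplit3 p hp0) (hsplit3 q hq0) (hsplit3 s hs0.le)
  have hIneq : (m+1)^2 / D^2 * ((s ^ (2*m+1) - q ^ (2*m+1)) / (2*m+1))
      + (m+1)^2 / D^2 * ((s ^ (2*m+1) - p ^ (2*m+1)) / (2*m+1))
      ≤ (m+1)^2 / (s * (2*m+1)) := by
    rw [← hDdef] at hkW
    have hD2 : (0:ℝ) < D^2 := by positivity
    rw [show (m+1)^2 / D^2 * ((s ^ (2*m+1) - q ^ (2*m+1)) / (2*m+1))
        + (m+1)^2 / D^2 * ((s ^ (2*m+1) - p ^ (2*m+1)) / (2*m+1))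
        = ((m+1)^2 * (2 * s ^ (2*m+1) - p ^ (2*m+1) - q ^ (2*m+1))) / (D^2 * (2*m+1)) by
      field_simp; ring]
    rw [div_le_div_iff₀ (by positivity) (by positivity)]
    linarith [mul_le_mul_of_nonneg_left hkW (show (0:ℝ) ≤ (m+1)^2 * (2*m+1) by positivity)]
  -- bound for the kernel part
  have hamgmQ : (m+2) * Q * s ≤ (m+1) * q * Q + s * S := by
    have h := amgm_aux hm hq0 hqs
    rw [← hQdef, ← hSdef] at h
    linarith [h]
  have hamgmP : (m+2) * P * s ≤ (m+1) * p * P + s * S := by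
    have h := amgm_aux hm hp0 hps
    rw [← hPdef, ← hSdef] at h
    linarith [h]
  have hkG1 := keyG hm hq0 hp0 (by linarith : q + p = s) hS0.le hQ0 hQS hPsS hamgmQ
  have hkG2 := keyG hm hp0 hq0 hpq hS0.le hP0 hPS hQsS hamgmP
  have hGq : (s ^ (2*m+3) - q ^ (2*m+3)) / (2*m+3)
      - 2*Q*(s ^ (m+2) - q ^ (m+2)) / (m+2) + Q^2 * p
      = (s * S^2 - q * Q^2) / (2*m+3) - 2*Q*(s * S - q * Q) / (m+2) + Q^2 * (s - q) := by
    rw [hsplit23 s hs0.le, hsplit23 q hq0, hsplit12 s hs0.le, hsplit12 q hq0,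
      ← hSdef, ← hQdef]
    linear_combination Q^2 * hpq
  have hGp : (s ^ (2*m+3) - p ^ (2*m+3)) / (2*m+3)
      - 2*P*(s ^ (m+2) - p ^ (m+2)) / (m+2) + P^2 * q
      = (s * S^2 - p * P^2) / (2*m+3) - 2*P*(s * S - p * P) / (m+2) + P^2 * (s - p) := by
    rw [hsplit23 s hs0.le, hsplit23 p hp0, hsplit12 s hs0.le, hsplit12 p hp0,
      ← hSdef, ← hPdef]
    linear_combination P^2 * hpq
  have hJ₁b : (∫ y in a..x, (Φ₁ y) ^ 2) ≤ 1/D^2 * (s * (S - Q) * (2*S - Q - P) / (2*m+3)) := by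
    rw [hJ₁, hGq]
    exact mul_le_mul_of_nonneg_left hkG1 (by positivity)
  have hJ₂b : (∫ y in x..b, (Φ₂ y) ^ 2) ≤ 1/D^2 * (s * (S - P) * (2*S - P - Q) / (2*m+3)) := by
    rw [hJ₂, hGp]
    exact mul_le_mul_of_nonneg_left hkG2 (by positivity)
  have hJsum : (∫ y in a..x, (Φ₁ y) ^ 2) + (∫ y in x..b, (Φ₂ y) ^ 2) ≤ s / (2*m+3) := by
    have e : 1/D^2 * (s * (S - Q) * (2*S - Q - P) / (2*m+3))
        + 1/D^2 * (s * (S - P) * (2*S - P - Q) / (2*m+3)) = s / (2*m+3) := by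
      have hDne : (2*S - P - Q) ≠ 0 := by rw [← hDdef]; exact hD0'
      rw [hDdef]
      field_simp
      ring
    linarith [hJ₁b, hJ₂b, e]
  -- integrability of v and v'
  have hxmem : x ∈ Set.uIcc a b := by rw [Set.uIcc_of_le hab']; exact ⟨hax, hxb⟩
  have hsub1 : Set.uIcc a x ⊆ Set.uIcc a b := Set.uIcc_subset_uIcc Set.left_mem_uIcc hxmem
  have hsub2 : Set.uIcc x b ⊆ Set.uIcc a b := Set.uIcc_subset_uIcc hxmem Set.right_mem_uIcc
  have hv2ax := hv.mono_set hsub1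
  have hv2xb := hv.mono_set hsub2
  have hv'2ax := hv'.mono_set hsub1
  have hv'2xb := hv'.mono_set hsub2
  have hder_eq : ∀ y ∈ Set.Icc a b, deriv v y = v' y := fun y hy => (hderiv y hy).deriv
  have hv'm : ∀ {α β : ℝ}, a ≤ α → β ≤ b →
      AEStronglyMeasurable v' (volume.restrict (Set.Ioc α β)) := by
    intro α β h1 h2
    refine ((measurable_deriv v).aestronglyMeasurable).congr ?_
    filter_upwards [ae_restrict_mem measurableSet_Ioc] with y hy
    exact hder_eq y ⟨le_trans h1 hy.1.le, le_trans hy.2 h2⟩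
  have hv'ax : IntervalIntegrable v' volume a x := sq_int_self hax (hv'm le_rfl hxb) hv'2ax
  have hv'xb : IntervalIntegrable v' volume x b := sq_int_self hxb (hv'm hax le_rfl) hv'2xb
  have hvc : ContinuousOn v (Set.Icc a b) :=
    fun y hy => (hderiv y hy).continuousAt.continuousWithinAt
  have hvcax : ContinuousOn v (Set.uIcc a x) := hvc.mono (by
    rw [Set.uIcc_of_le hax]; exact Set.Icc_subset_Icc le_rfl hxb)
  have hvcxb : ContinuousOn v (Set.uIcc x b) := hvc.mono (by
    rw [Set.uIcc_of_le hxb]; exact Set.Icc_subset_Icc hax le_rfl)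
  -- integration by parts
  have hudax : ∀ y ∈ Set.uIcc a x, HasDerivAt v (v' y) y := fun y hy => hderiv y (by
    rw [Set.uIcc_of_le hax] at hy; exact ⟨hy.1, le_trans hy.2 hxb⟩)
  have hudxb : ∀ y ∈ Set.uIcc x b, HasDerivAt v (v' y) y := fun y hy => hderiv y (by
    rw [Set.uIcc_of_le hxb] at hy; exact ⟨le_trans hax hy.1, hy.2⟩)
  have hparts1 := intervalIntegral.integral_mul_deriv_eq_deriv_mul hΦ₁d hudax
    (hw₁c.intervalIntegrable a x) hv'ax
  have hparts2 := intervalIntegral.integral_mul_deriv_eq_deriv_mul hΦ₂d hudxb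
    (hw₂c.intervalIntegrable x b) hv'xb
  have hΦ₁x : Φ₁ x = (S - Q)/D := by simp only [hΦ₁def]; rw [hc₁x, ← hSdef]
  have hΦ₁a : Φ₁ a = 0 := by simp only [hΦ₁def]; rw [hc₁a, ← hQdef, sub_self, zero_div]
  have hΦ₂b : Φ₂ b = 0 := by simp only [hΦ₂def]; rw [hc₂b, ← hPdef, sub_self, zero_div]
  have hΦ₂x : Φ₂ x = (P - S)/D := by simp only [hΦ₂def]; rw [hc₂x, ← hSdef]
  have hsum1 : (S - Q)/D + (S - P)/D = 1 := by
    field_simp [hD0']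
    linarith [hDdef]
  have hid : v x = (∫ y in a..x, w₁ y * v y) + (∫ y in x..b, w₂ y * v y)
      + (∫ y in a..x, Φ₁ y * v' y) + (∫ y in x..b, Φ₂ y * v' y) := by
    rw [hΦ₁x, hΦ₁a] at hparts1
    rw [hΦ₂b, hΦ₂x] at hparts2
    linear_combination -hparts1 - hparts2 - v x * hsum1
  -- Cauchy-Schwarz
  have hg1 := abs_integral_mul_le hax w₁ v ((hw₁c.pow 2).intervalIntegrable a x) hv2ax
    ((hw₁c.continuousOn.mul hvcax).intervalIntegrable)
  have hg2 := abs_integral_mul_le hxb w₂ v ((hw₂c.pow 2).intervalIntegrable x b) hv2xb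
    ((hw₂c.continuousOn.mul hvcxb).intervalIntegrable)
  have hg3 := abs_integral_mul_le hax Φ₁ v' ((hΦ₁c.pow 2).intervalIntegrable a x) hv'2ax
    (mul_sq_int hax hΦ₁c (hv'm le_rfl hxb) hv'2ax)
  have hg4 := abs_integral_mul_le hxb Φ₂ v' ((hΦ₂c.pow 2).intervalIntegrable x b) hv'2xb
    (mul_sq_int hxb hΦ₂c (hv'm hax le_rfl) hv'2xb)
  -- nonnegativity
  have hI₁0 : 0 ≤ ∫ y in a..x, (w₁ y) ^ 2 :=
    intervalIntegral.integral_nonneg hax (fun u _ => sq_nonneg _)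
  have hI₂0 : 0 ≤ ∫ y in x..b, (w₂ y) ^ 2 :=
    intervalIntegral.integral_nonneg hxb (fun u _ => sq_nonneg _)
  have hJ₁0 : 0 ≤ ∫ y in a..x, (Φ₁ y) ^ 2 :=
    intervalIntegral.integral_nonneg hax (fun u _ => sq_nonneg _)
  have hJ₂0 : 0 ≤ ∫ y in x..b, (Φ₂ y) ^ 2 :=
    intervalIntegral.integral_nonneg hxb (fun u _ => sq_nonneg _)
  have hV₁0 : 0 ≤ ∫ y in a..x, (v y) ^ 2 :=
    intervalIntegral.integral_nonneg hax (fun u _ => sq_nonneg _)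
  have hV₂0 : 0 ≤ ∫ y in x..b, (v y) ^ 2 :=
    intervalIntegral.integral_nonneg hxb (fun u _ => sq_nonneg _)
  have hW₁0 : 0 ≤ ∫ y in a..x, (v' y) ^ 2 :=
    intervalIntegral.integral_nonneg hax (fun u _ => sq_nonneg _)
  have hW₂0 : 0 ≤ ∫ y in x..b, (v' y) ^ 2 :=
    intervalIntegral.integral_nonneg hxb (fun u _ => sq_nonneg _)
  -- adjacency
  have hVadd : (∫ y in a..x, (v y) ^ 2) + (∫ y in x..b, (v y) ^ 2)
      = ∫ y in a..b, (v y) ^ 2 := intervalIntegral.integral_add_adjacent_intervals hv2ax hv2xb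
  have hWadd : (∫ y in a..x, (v' y) ^ 2) + (∫ y in x..b, (v' y) ^ 2)
      = ∫ y in a..b, (v' y) ^ 2 := intervalIntegral.integral_add_adjacent_intervals hv'2ax hv'2xb
  -- combine pairs
  have hc1 := sqrt_pair hI₁0 hI₂0 hV₁0 hV₂0
  have hc2 := sqrt_pair hJ₁0 hJ₂0 hW₁0 hW₂0
  rw [hVadd] at hc1
  rw [hWadd] at hc2
  -- bounds on sqrt of sums
  have hIs : Real.sqrt ((∫ y in a..x, (w₁ y) ^ 2) + ∫ y in x..b, (w₂ y) ^ 2)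
      ≤ (m+1) / Real.sqrt (s * (2*m+1)) := by
    have h1 : (∫ y in a..x, (w₁ y) ^ 2) + (∫ y in x..b, (w₂ y) ^ 2)
        ≤ (m+1)^2 / (s * (2*m+1)) := by rw [hI₁, hI₂]; exact hIneq
    calc Real.sqrt ((∫ y in a..x, (w₁ y) ^ 2) + ∫ y in x..b, (w₂ y) ^ 2)
        ≤ Real.sqrt ((m+1)^2 / (s * (2*m+1))) := Real.sqrt_le_sqrt h1
      _ = Real.sqrt ((m+1)^2) / Real.sqrt (s * (2*m+1)) := Real.sqrt_div (by positivity) _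
      _ = (m+1) / Real.sqrt (s * (2*m+1)) := by rw [Real.sqrt_sq (by linarith : (0:ℝ) ≤ m+1)]
  have hJs : Real.sqrt ((∫ y in a..x, (Φ₁ y) ^ 2) + ∫ y in x..b, (Φ₂ y) ^ 2)
      ≤ Real.sqrt (s / (2*m+3)) := Real.sqrt_le_sqrt hJsum
  -- final assembly
  have habs : |v x| ≤ |∫ y in a..x, w₁ y * v y| + |∫ y in x..b, w₂ y * v y|
      + |∫ y in a..x, Φ₁ y * v' y| + |∫ y in x..b, Φ₂ y * v' y| := by
    rw [hid]
    calc |(∫ y in a..x, w₁ y * v y) + (∫ y in x..b, w₂ y * v y)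
        + (∫ y in a..x, Φ₁ y * v' y) + (∫ y in x..b, Φ₂ y * v' y)|
        ≤ |(∫ y in a..x, w₁ y * v y) + (∫ y in x..b, w₂ y * v y)
          + (∫ y in a..x, Φ₁ y * v' y)| + |∫ y in x..b, Φ₂ y * v' y| := abs_add_le _ _
      _ ≤ |(∫ y in a..x, w₁ y * v y) + (∫ y in x..b, w₂ y * v y)|
          + |∫ y in a..x, Φ₁ y * v' y| + |∫ y in x..b, Φ₂ y * v' y| := by
            linarith [abs_add_le ((∫ y in a..x, w₁ y * v y) + (∫ y in x..b, w₂ y * v y))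
              (∫ y in a..x, Φ₁ y * v' y)]
      _ ≤ |∫ y in a..x, w₁ y * v y| + |∫ y in x..b, w₂ y * v y|
          + |∫ y in a..x, Φ₁ y * v' y| + |∫ y in x..b, Φ₂ y * v' y| := by
            linarith [abs_add_le (∫ y in a..x, w₁ y * v y) (∫ y in x..b, w₂ y * v y)]
  have ht1 : (m+1) / Real.sqrt (s * (2*m+1)) * Real.sqrt (∫ y in a..b, (v y) ^ 2) ≥
      Real.sqrt ((∫ y in a..x, (w₁ y) ^ 2) + ∫ y in x..b, (w₂ y) ^ 2)
        * Real.sqrt (∫ y in a..b, (v y) ^ 2) :=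
    mul_le_mul_of_nonneg_right hIs (Real.sqrt_nonneg _)
  have ht2 : Real.sqrt (s / (2*m+3)) * Real.sqrt (∫ y in a..b, (v' y) ^ 2) ≥
      Real.sqrt ((∫ y in a..x, (Φ₁ y) ^ 2) + ∫ y in x..b, (Φ₂ y) ^ 2)
        * Real.sqrt (∫ y in a..b, (v' y) ^ 2) :=
    mul_le_mul_of_nonneg_right hJs (Real.sqrt_nonneg _)
  linarith [habs, hg1, hg2, hg3, hg4, hc1, hc2, ht1, ht2]

/-- Kato's inequality (IV.1.19): for `v ∈ H¹([a,b])` and `m > 0`,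
`sup_{[a,b]} |v| ≤ √((b−a)/(2m+3))‖v'‖_{L²} + ((m+1)/√((b−a)(2m+1)))‖v‖_{L²}`. -/
theorem stmt4 (a b m : ℝ) (hab : a < b) (hm : 0 < m) (v v' : ℝ → ℝ)
    (hderiv : ∀ x ∈ Set.Icc a b, HasDerivAt v (v' x) x)
    (hv : IntervalIntegrable (fun t => (v t) ^ 2) volume a b)
    (hv' : IntervalIntegrable (fun t => (v' t) ^ 2) volume a b) :
    ∀ x ∈ Set.Icc a b, |v x| ≤
      Real.sqrt ((b - a) / (2 * m + 3)) * Real.sqrt (∫ t in a..b, (v' t) ^ 2) +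
        (m + 1) / Real.sqrt ((b - a) * (2 * m + 1)) * Real.sqrt (∫ t in a..b, (v t) ^ 2) := by
  exact stmt4_main a b m hab hm v v' hderiv hv hv'

end Main
end

section
/- Let A be a self-adjoint lower semibounded operator on a Hilbert space H with associated closed quadratic form t_A, and let t be a symmetric quadratic form with dom(t_A) ⊆ dom(t) satisfying |t[f]| ≤ a·t_A[f] + b·‖f‖² for all f ∈ dom(t_A), with constants 0 < a < 1 and b > 0. Then the form t₁ := t_A + t on dom(t_A) is closed and lower semibounded. -/
/-- A quadratic form `s` on the domain `D` is lower semibounded by `-c`. -/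
def IsLowerBoundedForm {H : Type*} [NormedAddCommGroup H] [InnerProductSpace ℂ H]
    (D : Submodule ℂ H) (s : D → ℝ) (c : ℝ) : Prop :=
  ∀ f : D, -c * ‖(f : H)‖ ^ 2 ≤ s f

/-- The form norm `(s[f] + (c+1)‖f‖²)^{1/2}` associated with a form `s ≥ -c`. -/
noncomputable def formNorm {H : Type*} [NormedAddCommGroup H] [InnerProductSpace ℂ H]
    (D : Submodule ℂ H) (s : D → ℝ) (c : ℝ) (f : D) : ℝ :=
  Real.sqrt (s f + (c + 1) * ‖(f : H)‖ ^ 2)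

/-- A form `s ≥ -c` on `D` is closed: `D` is complete with respect to the form norm. -/
def IsClosedForm {H : Type*} [NormedAddCommGroup H] [InnerProductSpace ℂ H]
    (D : Submodule ℂ H) (s : D → ℝ) (c : ℝ) : Prop :=
  ∀ f : ℕ → D,
    (∀ ε > (0 : ℝ), ∃ N : ℕ, ∀ p ≥ N, ∀ q ≥ N, formNorm D s c (f p - f q) < ε) →
    ∃ g : D, Filter.Tendsto (fun n => formNorm D s c (f n - g)) Filter.atTop (nhds 0)

/-- KLMN theorem: if `A` is a self-adjoint lower semibounded operator with
associated closed quadratic form `t_A` and `t` is a (real-valued, hence symmetric) form on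
`dom(t_A)` with `|t[f]| ≤ a·t_A[f] + b‖f‖²`, `0 < a < 1`, `b > 0`, then the form
`t₁ = t_A + t` on `dom(t_A)` is closed and lower semibounded. -/
theorem stmt12 {H : Type*} [NormedAddCommGroup H] [InnerProductSpace ℂ H] [CompleteSpace H]
    (A : H →ₗ.[ℂ] H) (hsa : IsSelfAdjoint A) (c : ℝ)
    (hAbd : ∀ u : A.domain, -c * ‖(u : H)‖ ^ 2 ≤ (inner ℂ (A u) ((u : H)) : ℂ).re)
    (D : Submodule ℂ H) (hAD : A.domain ≤ D) (tA : D → ℝ)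
    (htA_agree : ∀ u : A.domain, tA ⟨(u : H), hAD u.2⟩ = (inner ℂ (A u) ((u : H)) : ℂ).re)
    (h_lb : IsLowerBoundedForm D tA c) (h_closed : IsClosedForm D tA c)
    (t : D → ℝ) (a b : ℝ) (ha0 : 0 < a) (ha1 : a < 1) (hb : 0 < b)
    (hbound : ∀ f : D, |t f| ≤ a * tA f + b * ‖(f : H)‖ ^ 2) :
    ∃ c' : ℝ, IsLowerBoundedForm D (fun f => tA f + t f) c' ∧
      IsClosedForm D (fun f => tA f + t f) c' := by
  have ha' : (0:ℝ) < 1 - a := by linarith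
  set c' : ℝ := (1 - a) * c + b with hc'
  set M : ℝ := b + c' + 1 - (1 + a) * c with hM
  set K : ℝ := 1 + a + |M| with hKdef
  have hK : 0 < K := by positivity
  -- lower bound comparison: (1-a)·(tA f + (c+1)‖f‖²) ≤ (tA f + t f) + (c'+1)‖f‖²
  have hlow : ∀ f : D, (1 - a) * (tA f + (c + 1) * ‖(f : H)‖ ^ 2)
      ≤ (tA f + t f) + (c' + 1) * ‖(f : H)‖ ^ 2 := by
    intro f
    have h2 := (abs_le.mp (hbound f)).1
    nlinarith [sq_nonneg ‖(f : H)‖]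
  -- upper bound comparison
  have hupp : ∀ f : D, (tA f + t f) + (c' + 1) * ‖(f : H)‖ ^ 2
      ≤ K * (tA f + (c + 1) * ‖(f : H)‖ ^ 2) := by
    intro f
    have h2 := (abs_le.mp (hbound f)).2
    have hq : 0 ≤ tA f + c * ‖(f : H)‖ ^ 2 := by
      have := h_lb f; nlinarith [sq_nonneg ‖(f : H)‖]
    have habs : M ≤ |M| := le_abs_self M
    have h1 : 0 ≤ |M| * (tA f + c * ‖(f : H)‖ ^ 2) := mul_nonneg (abs_nonneg M) hq
    nlinarith [sq_nonneg ‖(f : H)‖, abs_nonneg M, mul_nonneg ha0.le hq]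
  have hX0 : ∀ f : D, 0 ≤ tA f + (c + 1) * ‖(f : H)‖ ^ 2 := by
    intro f
    have := h_lb f; nlinarith [sq_nonneg ‖(f : H)‖]
  have hY0 : ∀ f : D, 0 ≤ (tA f + t f) + (c' + 1) * ‖(f : H)‖ ^ 2 := by
    intro f
    exact le_trans (mul_nonneg ha'.le (hX0 f)) (hlow f)
  set C1 : ℝ := Real.sqrt (1 / (1 - a)) with hC1def
  have hC1 : 0 < C1 := Real.sqrt_pos.mpr (by positivity)
  -- formNorm tA ≤ C1 * formNorm (tA + t)
  have hNle : ∀ f : D, formNorm D tA c f ≤ C1 * formNorm D (fun f => tA f + t f) c' f := by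
    intro f
    unfold formNorm
    rw [hC1def, ← Real.sqrt_mul (by positivity)]
    apply Real.sqrt_le_sqrt
    rw [div_mul_eq_mul_div, one_mul, le_div_iff₀ ha']
    calc (tA f + (c + 1) * ‖(f : H)‖ ^ 2) * (1 - a)
        = (1 - a) * (tA f + (c + 1) * ‖(f : H)‖ ^ 2) := by ring
      _ ≤ _ := hlow f
  -- formNorm (tA + t) ≤ √K * formNorm tA
  have hN1le : ∀ f : D, formNorm D (fun f => tA f + t f) c' f
      ≤ Real.sqrt K * formNorm D tA c f := by
    intro f
    unfold formNorm
    rw [← Real.sqrt_mul hK.le]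
    exact Real.sqrt_le_sqrt (hupp f)
  refine ⟨c', ?_, ?_⟩
  · intro f
    have h2 := (abs_le.mp (hbound f)).1
    have h3 := h_lb f
    have hq : 0 ≤ tA f + c * ‖(f : H)‖ ^ 2 := by nlinarith
    show -((1 - a) * c + b) * ‖(f : H)‖ ^ 2 ≤ tA f + t f
    nlinarith [mul_nonneg ha'.le hq]
  · intro f hf
    have hf' : ∀ ε > (0:ℝ), ∃ N : ℕ, ∀ p ≥ N, ∀ q ≥ N, formNorm D tA c (f p - f q) < ε := by
      intro ε hε
      obtain ⟨N, hN⟩ := hf (ε / C1) (by positivity)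
      refine ⟨N, fun p hp q hq => ?_⟩
      calc formNorm D tA c (f p - f q)
          ≤ C1 * formNorm D (fun f => tA f + t f) c' (f p - f q) := hNle _
        _ < C1 * (ε / C1) := by
            exact (mul_lt_mul_iff_right₀ hC1).mpr (hN p hp q hq)
        _ = ε := mul_div_cancel₀ ε hC1.ne'
    obtain ⟨g, hg⟩ := h_closed f hf'
    refine ⟨g, ?_⟩
    have hb1 : ∀ n, (0:ℝ) ≤ formNorm D (fun f => tA f + t f) c' (f n - g) :=
      fun n => Real.sqrt_nonneg _
    have hb2 : ∀ n, formNorm D (fun f => tA f + t f) c' (f n - g)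
        ≤ Real.sqrt K * formNorm D tA c (f n - g) := fun n => hN1le _
    have hlim : Filter.Tendsto (fun n => Real.sqrt K * formNorm D tA c (f n - g))
        Filter.atTop (nhds 0) := by
      simpa using hg.const_mul (Real.sqrt K)
    exact squeeze_zero hb1 hb2 hlim
end
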